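/- There is a constant c₁ = c₁(d) < ∞ such that for every integer k > c₁, ℙ(E_k^c) ≤ e^{−k}; that is, the probability that the cube S(−s_k, r_k − 1) contains no k-seed is at most e^{−k}. -/

import Mathlib

open MeasureTheory ENNReal

noncomputable section

/-- Sites: the lattice `ℤ^d`. -/
abbrev Site (d : ℕ) := Fin d → ℤ

/-- Configurations: elements of `{0,1}^{ℤ^d}`, encoded with `Bool`. -/
abbrev Config (d : ℕ) := Site d → Bool

/-- The translation `θ^z` acting on configurations: `(θ^z γ)(x) = γ(x - z)`. -/
def shiftCfg {d : ℕ} (z : Site d) (γ : Config d) : Config d := fun x => γ (x - z)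

/-- `φ` is a matching on `γ`: an involutive bijection matching ones to zeros. -/
def IsMatching {d : ℕ} (γ : Config d) (φ : Site d → Site d) : Prop :=
  Function.Bijective φ ∧ (∀ x, φ (φ x) = x) ∧ ∀ x, γ (φ x) = !(γ x)

/-- `Φ` is a matching rule with respect to the measure `P`. -/
def IsMatchingRule {d : ℕ} (P : Measure (Config d)) (Φ : Config d → Site d → Site d) : Prop :=
  (∀ x : Site d, Measurable fun γ => Φ γ x) ∧ ∀ᵐ γ ∂P, IsMatching γ (Φ γ)

/-- `Φ` is translation-equivariant with respect to `P`. -/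
def IsEquivariant {d : ℕ} (P : Measure (Config d)) (Φ : Config d → Site d → Site d) : Prop :=
  ∀ z x : Site d, ∀ᵐ γ ∂P, Φ (shiftCfg z γ) (x + z) = Φ γ x + z

/-- `P` is the product measure with i.i.d. Bernoulli(1/2) coordinates, characterized by
its values on cylinder events. -/
def IsBernoulliHalfProduct {d : ℕ} (P : Measure (Config d)) : Prop :=
  IsProbabilityMeasure P ∧
    ∀ (s : Finset (Site d)) (f : Site d → Bool),
      P {γ | ∀ x ∈ s, γ x = f x} = (1 / 2 : ℝ≥0∞) ^ s.card

/-- `Z_Φ(γ) = ‖Φ(γ, 0)‖`, the `ℓ^∞` distance from the origin to its partner. -/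
def ZΦ {d : ℕ} (Φ : Config d → Site d → Site d) (γ : Config d) : ℝ := ‖Φ γ 0‖

/-- Embedding of the lattice in `ℝ^d`. -/
def toR {d : ℕ} (x : Site d) : Fin d → ℝ := fun i => (x i : ℝ)

/-- The first standard basis vector `e₁`. -/
def e1 (d : ℕ) : Site d := fun i => if (i : ℕ) = 0 then 1 else 0

/-- `x` is a `k`-seed for `γ`. -/
def IsSeed {d : ℕ} (γ : Config d) (k : ℕ) (x : Site d) : Prop :=
  γ x = true ∧ ∀ n : ℕ, 1 ≤ n → n ≤ k - 1 → γ (x + (n : ℤ) • e1 d) = false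

/-- `r_k = (2^k k²)^{1/d} + 1/2`. -/
def rr (d k : ℕ) : ℝ := ((2 : ℝ) ^ k * (k : ℝ) ^ 2) ^ ((d : ℝ)⁻¹) + 1 / 2

/-- The shift `s_k = ⌊100 r_k⌋ e₁`. -/
def ss (d k : ℕ) : Site d := ⌊(100 : ℝ) * rr d k⌋ • e1 d

/-- `W_k(γ)`: the union of all `k`-cutters. -/
def cutters {d : ℕ} (γ : Config d) (k : ℕ) : Set (Fin d → ℝ) :=
  ⋃ x ∈ {x : Site d | IsSeed γ k (x - ss d k)}, {y : Fin d → ℝ | ‖y - toR x‖ = rr d k}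

/-- The `k`-blob containing the point `p ∈ ℝ^d`: the connected component of `p` in the
complement of all `j`-cutters with `j > k`. -/
def blob {d : ℕ} (γ : Config d) (k : ℕ) (p : Fin d → ℝ) : Set (Fin d → ℝ) :=
  connectedComponentIn (⋃ j ∈ {j : ℕ | k < j}, cutters γ j)ᶜ p

/-- The `k`-clump of a site `x`: the lattice points of the `k`-blob containing `x`. -/
def clump {d : ℕ} (γ : Config d) (k : ℕ) (x : Site d) : Set (Site d) :=
  {y : Site d | toR y ∈ blob γ k (toR x)}

/-- The event `E_k`: the cube `S(-s_k, r_k - 1)` contains a `k`-seed. -/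
def Ek (d k : ℕ) : Set (Config d) :=
  {γ | ∃ y : Site d, IsSeed γ k y ∧ ‖toR y + toR (ss d k)‖ ≤ rr d k - 1}

/-- A `k`-seed lying in the annulus `S(-s_k, r_k + s) \ S(-s_k, r_k - s)`. -/
def SeedInAnnulus {d : ℕ} (γ : Config d) (k : ℕ) (s : ℝ) (y : Site d) : Prop :=
  IsSeed γ k y ∧ ‖toR y + toR (ss d k)‖ ≤ rr d k + s ∧ rr d k - s < ‖toR y + toR (ss d k)‖

/-- The event `U_k(s)`: `S(-s_k, r_k + s) \ S(-s_k, r_k - s)` contains a `k`-seed. -/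
def Uk (d : ℕ) (k : ℕ) (s : ℝ) : Set (Config d) :=
  {γ | ∃ y : Site d, SeedInAnnulus γ k s y}

/-- The event `C_k(s) = ∪_{j ≥ k} U_j(s)`. -/
def Ck (d : ℕ) (k : ℕ) (s : ℝ) : Set (Config d) :=
  {γ | ∃ j : ℕ, k ≤ j ∧ γ ∈ Uk d j s}

/-- `±1`-valued spin `2γ(x) - 1`. -/
def pm1 {d : ℕ} (γ : Config d) (y : Site d) : ℤ := if γ y then 1 else -1

/-- `Φ` matches maximally within clumps: a.s. every clump is finite and the number of
sites of each `k`-clump `L` matched outside `L` equals `|Σ_{x ∈ L} (2γ(x) - 1)|`. -/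
def MatchesMaximally {d : ℕ} (P : Measure (Config d))
    (Φ : Config d → Site d → Site d) : Prop :=
  ∀ᵐ γ ∂P, ∀ k : ℕ, 1 ≤ k → ∀ x : Site d,
    (clump γ k x).Finite ∧
      (({y ∈ clump γ k x | Φ γ y ∉ clump γ k x}.ncard : ℤ)
        = |∑ᶠ y ∈ clump γ k x, pm1 γ y|)


/-! ### Auxiliary constructions for statement5 -/

/-- Index type for the disjoint seed slots inside the cube `S(-s_k, r_k - 1)`. -/
abbrev SlotIdx (d R A : ℕ) := Fin A × ({i : Fin d // (i : ℕ) ≠ 0} → Fin (2 * R + 1))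

/-- The `n`-th site of the slot indexed by `j`. -/
def siteOf (d k R : ℕ) {A : ℕ} (j : SlotIdx d R A) (n : ℕ) : Site d :=
  fun i =>
    (if h : (i : ℕ) = 0 then (-(R : ℤ) + ((j.1 : ℕ) * k + n : ℕ))
      else (((j.2 ⟨i, h⟩ : ℕ) : ℤ) - R)) - ss d k i

lemma siteOf_shift (d k R : ℕ) {A : ℕ} (j : SlotIdx d R A) (n : ℕ) :
    siteOf d k R j n = siteOf d k R j 0 + (n : ℤ) • e1 d := by
  funext i
  by_cases h : (i : ℕ) = 0 <;>
    simp only [siteOf, Pi.add_apply, Pi.smul_apply, e1, h, dif_pos, dif_neg, if_pos, if_neg,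
      not_false_iff, smul_eq_mul, mul_one, mul_zero] <;> push_cast <;> ring

lemma siteOf_norm (d k R : ℕ) {A : ℕ} (j : SlotIdx d R A) (n : ℕ)
    (hR : (R : ℝ) ≤ rr d k - 1) (hm : (j.1 : ℕ) * k + n ≤ 2 * R) :
    ‖toR (siteOf d k R j n) + toR (ss d k)‖ ≤ rr d k - 1 := by
  have hR0 : (0 : ℝ) ≤ (R : ℝ) := by positivity
  refine le_trans ?_ hR
  rw [pi_norm_le_iff_of_nonneg hR0]
  intro i
  have hcomp : siteOf d k R j n i + ss d k i =
      (if h : (i : ℕ) = 0 then (-(R : ℤ) + ((j.1 : ℕ) * k + n : ℕ))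
        else (((j.2 ⟨i, h⟩ : ℕ) : ℤ) - R)) := by
    simp [siteOf]
  have habs : |siteOf d k R j n i + ss d k i| ≤ (R : ℤ) := by
    rw [hcomp]
    by_cases h : (i : ℕ) = 0
    · rw [dif_pos h, abs_le]
      constructor <;> omega
    · rw [dif_neg h, abs_le]
      have := (j.2 ⟨i, h⟩).isLt
      constructor <;> omega
  have : (toR (siteOf d k R j n) + toR (ss d k)) i
      = ((siteOf d k R j n i + ss d k i : ℤ) : ℝ) := by
    simp [toR]
  rw [this, Real.norm_eq_abs, ← Int.cast_abs]
  exact_mod_cast habs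

lemma siteOf_injective (d k R : ℕ) {A : ℕ} (hd : 0 < d) (hk : 0 < k) :
    Function.Injective (fun p : SlotIdx d R A × Fin k => siteOf d k R p.1 (p.2 : ℕ)) := by
  intro p q hpq
  simp only at hpq
  have h0 : siteOf d k R p.1 (p.2 : ℕ) ⟨0, hd⟩ = siteOf d k R q.1 (q.2 : ℕ) ⟨0, hd⟩ :=
    congrFun hpq ⟨0, hd⟩
  simp only [siteOf, Fin.val_mk, dif_pos, sub_left_inj] at h0
  have hnat : (p.1.1 : ℕ) * k + (p.2 : ℕ) = (q.1.1 : ℕ) * k + (q.2 : ℕ) := by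
    have h := h0
    push_cast at h
    zify
    linarith
  have hdiv : ∀ a b : ℕ, b < k → (a * k + b) / k = a := by
    intro a b hb
    rw [add_comm, Nat.add_mul_div_right _ _ hk, Nat.div_eq_of_lt hb, zero_add]
  have ha : (p.1.1 : ℕ) = (q.1.1 : ℕ) := by
    have h1 := hdiv (p.1.1 : ℕ) (p.2 : ℕ) p.2.isLt
    have h2 := hdiv (q.1.1 : ℕ) (q.2 : ℕ) q.2.isLt
    rw [← h1, ← h2, hnat]
  have hn : (p.2 : ℕ) = (q.2 : ℕ) := by
    rw [ha] at hnat
    exact Nat.add_left_cancel hnat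
  have hw : p.1.2 = q.1.2 := by
    funext i
    have hi : siteOf d k R p.1 (p.2 : ℕ) i.1 = siteOf d k R q.1 (q.2 : ℕ) i.1 :=
      congrFun hpq i.1
    simp only [siteOf, dif_neg i.2, sub_left_inj] at hi
    have : ((p.1.2 ⟨i.1, i.2⟩ : ℕ) : ℤ) = ((q.1.2 ⟨i.1, i.2⟩ : ℕ) : ℤ) := by omega
    exact Fin.ext (by exact_mod_cast this)
  exact Prod.ext (Prod.ext (Fin.ext ha) hw) (Fin.ext hn)

set_option maxHeartbeats 2000000 in
/-- Enclosure bounds: there is `c₁ = c₁(d) < ∞` such that `ℙ(E_k^c) ≤ e^{-k}` for all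
`k > c₁`. -/
theorem statement5 (d : ℕ) (hd : 1 ≤ d)
    (P : Measure (Config d)) (hP : IsBernoulliHalfProduct P) :
    ∃ c₁ : ℝ, ∀ k : ℕ, c₁ < (k : ℝ) →
      P (Ek d k)ᶜ ≤ ENNReal.ofReal (Real.exp (-(k : ℝ))) := by
  classical
  obtain ⟨hPprob, hPcyl⟩ := hP
  have hd0 : 0 < d := hd
  -- eventually `(20k)^d ≤ 2^k`
  have hev : ∀ᶠ k : ℕ in Filter.atTop, ((20 : ℝ) * k) ^ d ≤ 2 ^ k := by
    have h0 : Filter.Tendsto (fun k : ℕ => ((k : ℝ)) ^ d / 2 ^ k) Filter.atTop (nhds 0) :=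
      tendsto_pow_const_div_const_pow_of_one_lt d (by norm_num)
    have h1 : ∀ᶠ k : ℕ in Filter.atTop, (k : ℝ) ^ d / 2 ^ k < (20 : ℝ)⁻¹ ^ d :=
      h0.eventually_lt_const (by positivity)
    filter_upwards [h1] with k hk
    have h2 : (0 : ℝ) < 2 ^ k := by positivity
    have h3 : (k : ℝ) ^ d < (20 : ℝ)⁻¹ ^ d * 2 ^ k := by
      rw [div_lt_iff₀ h2] at hk; exact hk
    have h4 : (0 : ℝ) < (20 : ℝ) ^ d := by positivity
    rw [mul_pow]
    nlinarith [pow_pos (show (0:ℝ) < 20 by norm_num) d,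
      mul_pos (pow_pos (show (0:ℝ) < 20 by norm_num) d) h2,
      inv_pow (20 : ℝ) d, mul_inv_cancel₀ (ne_of_gt h4)]
  obtain ⟨K, hK⟩ := Filter.eventually_atTop.1 hev
  refine ⟨(max K 1 : ℕ), fun k hk => ?_⟩
  have hkK : K ≤ k := le_of_lt (lt_of_le_of_lt (le_max_left _ _) (by exact_mod_cast hk))
  have hk1 : 1 ≤ k := le_of_lt (lt_of_le_of_lt (le_max_right _ _) (by exact_mod_cast hk))
  have hk0 : 0 < k := hk1
  -- the radius
  set t : ℝ := ((2 : ℝ) ^ k * (k : ℝ) ^ 2) ^ ((d : ℝ)⁻¹) with ht_def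
  have hx0 : (0 : ℝ) ≤ (2 : ℝ) ^ k * (k : ℝ) ^ 2 := by positivity
  have ht0 : 0 ≤ t := Real.rpow_nonneg hx0 _
  have htd : t ^ d = (2 : ℝ) ^ k * (k : ℝ) ^ 2 :=
    Real.rpow_inv_natCast_pow hx0 (by omega)
  have hkR1 : (1 : ℝ) ≤ (k : ℝ) := by exact_mod_cast hk1
  have hk2 : (1 : ℝ) ≤ (k : ℝ) ^ 2 := by nlinarith
  have h20k : (20 : ℝ) * k ≤ t := by
    by_contra hlt
    push_neg at hlt
    have h1 : t ^ d < ((20 : ℝ) * k) ^ d := pow_lt_pow_left₀ hlt ht0 (by omega)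
    have h2 : ((20 : ℝ) * k) ^ d ≤ 2 ^ k := hK k hkK
    have h3 : (0 : ℝ) < 2 ^ k := by positivity
    nlinarith
  have ht20 : (20 : ℝ) ≤ t := by nlinarith
  have hrr : rr d k = t + 1 / 2 := rfl
  clear_value t
  -- the cube radius
  set R : ℕ := ⌊t - 1 / 2⌋₊ with hR_def
  have hR1 : (R : ℝ) ≤ t - 1 / 2 := Nat.floor_le (by linarith)
  have hR2 : t - 1 / 2 < (R : ℝ) + 1 := Nat.lt_floor_add_one _
  have hRrr : (R : ℝ) ≤ rr d k - 1 := by rw [hrr]; linarith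
  have hBr : (2 : ℝ) * t - 2 ≤ 2 * (R : ℝ) + 1 := by linarith
  have hBr19 : (19 / 10 : ℝ) * t ≤ 2 * (R : ℝ) + 1 := by linarith
  have hBr20k : (20 : ℝ) * k ≤ 2 * (R : ℝ) + 1 := by linarith
  clear_value R
  -- number of slots per line
  set A : ℕ := (2 * R + 1) / k with hA_def
  have hkB : k ≤ 2 * R + 1 := by
    have : (k : ℝ) ≤ 2 * (R : ℝ) + 1 := by linarith
    exact_mod_cast this
  have hA1 : 1 ≤ A := (Nat.one_le_div_iff hk0).2 hkB
  have hAk_le : A * k ≤ 2 * R + 1 := Nat.div_mul_le_self _ _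
  have hAk_gt : 2 * R + 1 < k * A + k := by
    calc 2 * R + 1 = k * A + (2 * R + 1) % k := by
          rw [hA_def]; exact (Nat.div_add_mod _ _).symm
      _ < k * A + k := Nat.add_lt_add_left (Nat.mod_lt _ hk0) _
  have hkA : (19 / 20 : ℝ) * (2 * (R : ℝ) + 1) ≤ (k : ℝ) * A := by
    have h1 : (2 * (R : ℝ) + 1) < (k : ℝ) * A + k := by exact_mod_cast hAk_gt
    linarith
  clear_value A
  -- slot sites
  haveI : Nonempty (SlotIdx d R A × Fin k) :=
    ⟨(⟨⟨0, hA1⟩, fun _ => ⟨0, by omega⟩⟩, ⟨0, hk0⟩)⟩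
  set site : SlotIdx d R A × Fin k → Site d :=
    fun p => siteOf d k R p.1 (p.2 : ℕ) with hsite_def
  have hinj : Function.Injective site := siteOf_injective d k R hd0 hk0
  set S : Finset (Site d) := Finset.image site Finset.univ with hS_def
  set M : ℕ := Fintype.card (SlotIdx d R A) with hM_def
  clear_value M
  have hScard : S.card = M * k := by
    rw [hS_def, Finset.card_image_of_injective _ hinj, Finset.card_univ,
      Fintype.card_prod, Fintype.card_fin, hM_def]
  -- slot start bound
  have hstart : ∀ j : SlotIdx d R A, (j.1 : ℕ) * k ≤ 2 * R := by
    intro j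
    have h1 : (j.1 : ℕ) * k + k ≤ 2 * R + 1 := by
      calc (j.1 : ℕ) * k + k = ((j.1 : ℕ) + 1) * k := (Nat.succ_mul _ _).symm
        _ ≤ A * k := Nat.mul_le_mul_right _ j.1.isLt
        _ ≤ 2 * R + 1 := hAk_le
    have h2 : (j.1 : ℕ) * k + 1 ≤ (j.1 : ℕ) * k + k := Nat.add_le_add_left hk1 _
    exact Nat.lt_succ_iff.1 (lt_of_lt_of_le (Nat.lt_of_lt_of_le (Nat.lt_succ_of_le le_rfl) h2) h1)
  -- the seed pattern
  set pat : Fin k → Bool := fun n => decide ((n : ℕ) = 0) with hpat_def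
  set bad : Finset (SlotIdx d R A → Fin k → Bool) :=
    Finset.univ.filter (fun h => ∀ j, h j ≠ pat) with hbad_def
  set cylH : (SlotIdx d R A → Fin k → Bool) → Set (Config d) :=
    fun h => {γ | ∀ p : SlotIdx d R A × Fin k, γ (site p) = h p.1 p.2} with hcylH_def
  -- covering
  have hcover : (Ek d k)ᶜ ⊆ ⋃ h ∈ bad, cylH h := by
    intro γ hγ
    set h : SlotIdx d R A → Fin k → Bool := fun j n => γ (site (j, n)) with hh_def
    have hmem : γ ∈ cylH h := fun p => rfl
    have hbadmem : h ∈ bad := by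
      rw [hbad_def, Finset.mem_filter]
      refine ⟨Finset.mem_univ _, fun j hj => ?_⟩
      -- `h j = pat` would give a seed in the cube
      apply hγ
      refine ⟨siteOf d k R j 0, ⟨?_, ?_⟩, ?_⟩
      · have := congrFun hj ⟨0, hk0⟩
        simpa [hh_def, hpat_def, hsite_def] using this
      · intro n h1n hnk1
        have hnk : n < k := by omega
        have hne : n ≠ 0 := by omega
        have := congrFun hj ⟨n, hnk⟩
        rw [← siteOf_shift d k R j n]
        simpa [hh_def, hpat_def, hsite_def, hne] using this
      · exact siteOf_norm d k R j 0 hRrr (by simpa using hstart j)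
    exact Set.mem_biUnion hbadmem hmem
  -- each cylinder has probability `(1/2)^(M*k)`
  have hcyl : ∀ h : SlotIdx d R A → Fin k → Bool,
      P (cylH h) = (1 / 2 : ℝ≥0∞) ^ (M * k) := by
    intro h
    set f : Site d → Bool :=
      fun x => h (Function.invFun site x).1 (Function.invFun site x).2 with hf_def
    have hfs : ∀ p : SlotIdx d R A × Fin k, f (site p) = h p.1 p.2 := by
      intro p
      have hl : Function.invFun site (site p) = p := Function.leftInverse_invFun hinj p
      simp only [hf_def, hl]
    have hset : cylH h = {γ | ∀ x ∈ S, γ x = f x} := by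
      ext γ
      constructor
      · intro hγ x hx
        obtain ⟨p, _, rfl⟩ := Finset.mem_image.1 hx
        rw [hγ p, hfs p]
      · intro hγ p
        have hx : site p ∈ S := Finset.mem_image.2 ⟨p, Finset.mem_univ _, rfl⟩
        rw [hγ (site p) hx, hfs p]
    rw [hset, hPcyl S f, hScard]
  -- counting bad patterns
  have hbadcard : bad.card = (2 ^ k - 1) ^ M := by
    have hcv : Fintype.card {v : Fin k → Bool // v ≠ pat} = 2 ^ k - 1 := by
      have h1 : Fintype.card {v : Fin k → Bool // v = pat} = 1 := Fintype.card_subtype_eq pat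
      calc Fintype.card {v : Fin k → Bool // v ≠ pat}
          = Fintype.card (Fin k → Bool) - Fintype.card {v : Fin k → Bool // v = pat} :=
            Fintype.card_subtype_compl _
        _ = 2 ^ k - 1 := by rw [h1, Fintype.card_fun, Fintype.card_bool, Fintype.card_fin]
    calc bad.card = Fintype.card {h : SlotIdx d R A → Fin k → Bool // ∀ j, h j ≠ pat} :=
          (Fintype.card_subtype _).symm
      _ = Fintype.card (SlotIdx d R A → {v : Fin k → Bool // v ≠ pat}) :=
          Fintype.card_congr
            (Equiv.subtypePiEquivPi (p := fun (_ : SlotIdx d R A) (v : Fin k → Bool) => v ≠ pat))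
      _ = (2 ^ k - 1) ^ M := by rw [Fintype.card_fun, hcv, hM_def]
  -- lower bound on the number of slots
  have hMnat : M = A * (2 * R + 1) ^ (d - 1) := by
    have hcardsub : Fintype.card {i : Fin d // (i : ℕ) ≠ 0} = d - 1 := by
      have h1 : Fintype.card {i : Fin d // (i : ℕ) = 0} = 1 := by
        rw [Fintype.card_eq_one_iff]
        refine ⟨⟨⟨0, hd0⟩, rfl⟩, fun j => Subtype.ext (Fin.ext (by simpa using j.2))⟩
      calc Fintype.card {i : Fin d // (i : ℕ) ≠ 0}
          = Fintype.card (Fin d) - Fintype.card {i : Fin d // (i : ℕ) = 0} :=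
            Fintype.card_subtype_compl _
        _ = d - 1 := by rw [h1, Fintype.card_fin]
    rw [hM_def, Fintype.card_prod, Fintype.card_fin, Fintype.card_fun, Fintype.card_fin,
      hcardsub]
  have hMk : (k : ℝ) * 2 ^ k ≤ (M : ℝ) := by
    set Br : ℝ := 2 * (R : ℝ) + 1 with hBr_def
    have hBr0 : (0 : ℝ) ≤ Br := by positivity
    have hBrpow0 : (0 : ℝ) ≤ Br ^ (d - 1) := by positivity
    have hMr : (M : ℝ) = (A : ℝ) * Br ^ (d - 1) := by
      rw [hMnat]; push_cast; ring
    have hBd : Br ^ (d - 1) * Br = Br ^ d := by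
      rw [← pow_succ]
      congr 1
      omega
    have c3 : (19 / 10 : ℝ) * ((2 : ℝ) ^ k * (k : ℝ) ^ 2) ≤ Br ^ d := by
      have h1 : ((19 / 10 : ℝ) * t) ^ d ≤ Br ^ d :=
        pow_le_pow_left₀ (by positivity) hBr19 d
      have h2 : ((19 / 10 : ℝ) * t) ^ d = (19 / 10 : ℝ) ^ d * t ^ d := mul_pow _ _ _
      have h3 : (19 / 10 : ℝ) ≤ (19 / 10 : ℝ) ^ d :=
        le_self_pow₀ (by norm_num) (by omega)
      have h4 : (0 : ℝ) ≤ t ^ d := by positivity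
      have h5 : (19 / 10 : ℝ) * t ^ d ≤ (19 / 10 : ℝ) ^ d * t ^ d :=
        mul_le_mul_of_nonneg_right h3 h4
      linarith
    have step : (k : ℝ) * ((k : ℝ) * 2 ^ k) ≤ (k : ℝ) * (M : ℝ) := by
      have c1 : (19 / 20 : ℝ) * Br * Br ^ (d - 1) ≤ ((k : ℝ) * A) * Br ^ (d - 1) :=
        mul_le_mul_of_nonneg_right hkA hBrpow0
      have c2 : (19 / 20 : ℝ) * Br * Br ^ (d - 1) = (19 / 20 : ℝ) * Br ^ d := by
        rw [mul_assoc, mul_comm Br _, hBd]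
      have h2k0 : (0 : ℝ) ≤ (2 : ℝ) ^ k * (k : ℝ) ^ 2 := hx0
      have e1 : (k : ℝ) * (M : ℝ) = ((k : ℝ) * A) * Br ^ (d - 1) := by
        rw [hMr]; ring
      rw [e1]
      linarith
    have hkpos : (0 : ℝ) < (k : ℝ) := by positivity
    exact (mul_le_mul_iff_right₀ hkpos).1 step
  -- putting it together
  have hfinal : ((2 ^ k - 1 : ℕ) : ℝ≥0∞) ^ M * (1 / 2 : ℝ≥0∞) ^ (M * k)
      ≤ ENNReal.ofReal (Real.exp (-(k : ℝ))) := by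
    have h2kR : ((2 ^ k - 1 : ℕ) : ℝ) = 2 ^ k - 1 := by
      have h1 : 1 ≤ 2 ^ k := Nat.one_le_two_pow
      push_cast [h1]
      ring
    have hhalf : ((1 : ℝ≥0∞) / 2) = ENNReal.ofReal (1 / 2) := by
      rw [ENNReal.ofReal_div_of_pos (by norm_num)]
      simp
    have hq0 : (0 : ℝ) ≤ 1 - (1 / 2 : ℝ) ^ k := by
      have : (1 / 2 : ℝ) ^ k ≤ 1 := pow_le_one₀ (by norm_num) (by norm_num)
      linarith
    have hqe : 1 - (1 / 2 : ℝ) ^ k ≤ Real.exp (-(1 / 2 : ℝ) ^ k) := by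
      have := Real.add_one_le_exp (-(1 / 2 : ℝ) ^ k)
      linarith
    have h2half : (2 : ℝ) ^ k * (1 / 2 : ℝ) ^ k = 1 := by
      rw [← mul_pow]; norm_num
    have hreal : ((2 ^ k - 1 : ℕ) : ℝ) ^ M * (1 / 2 : ℝ) ^ (M * k) ≤ Real.exp (-(k : ℝ)) := by
      have e1 : (1 / 2 : ℝ) ^ (M * k) = ((1 / 2 : ℝ) ^ k) ^ M := by
        rw [← pow_mul, mul_comm]
      have e2 : ((2 ^ k - 1 : ℕ) : ℝ) ^ M * ((1 / 2 : ℝ) ^ k) ^ M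
          = (1 - (1 / 2 : ℝ) ^ k) ^ M := by
        rw [← mul_pow, h2kR, sub_mul, h2half, one_mul]
      rw [e1, e2]
      calc (1 - (1 / 2 : ℝ) ^ k) ^ M ≤ Real.exp (-(1 / 2 : ℝ) ^ k) ^ M :=
            pow_le_pow_left₀ hq0 hqe M
        _ = Real.exp ((M : ℝ) * (-(1 / 2 : ℝ) ^ k)) := (Real.exp_nat_mul _ M).symm
        _ ≤ Real.exp (-(k : ℝ)) := by
            rw [Real.exp_le_exp]
            have hp : (0 : ℝ) < (1 / 2 : ℝ) ^ k := by positivity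
            have h6 : (k : ℝ) * 2 ^ k * (1 / 2 : ℝ) ^ k ≤ (M : ℝ) * (1 / 2 : ℝ) ^ k :=
              mul_le_mul_of_nonneg_right hMk hp.le
            have h7 : (k : ℝ) * 2 ^ k * (1 / 2 : ℝ) ^ k = (k : ℝ) := by
              rw [mul_assoc, h2half, mul_one]
            linarith
    calc ((2 ^ k - 1 : ℕ) : ℝ≥0∞) ^ M * (1 / 2 : ℝ≥0∞) ^ (M * k)
        = ENNReal.ofReal (((2 ^ k - 1 : ℕ) : ℝ) ^ M * (1 / 2 : ℝ) ^ (M * k)) := by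
          rw [ENNReal.ofReal_mul (by positivity), ENNReal.ofReal_pow (by positivity),
            ENNReal.ofReal_pow (by positivity), ENNReal.ofReal_natCast, hhalf]
      _ ≤ ENNReal.ofReal (Real.exp (-(k : ℝ))) := ENNReal.ofReal_le_ofReal hreal
  calc P (Ek d k)ᶜ ≤ P (⋃ h ∈ bad, cylH h) := measure_mono hcover
    _ ≤ ∑ h ∈ bad, P (cylH h) := measure_biUnion_finset_le _ _
    _ = bad.card * (1 / 2 : ℝ≥0∞) ^ (M * k) := by
        rw [Finset.sum_congr rfl (fun h _ => hcyl h), Finset.sum_const, nsmul_eq_mul]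
    _ = ((2 ^ k - 1 : ℕ) : ℝ≥0∞) ^ M * (1 / 2 : ℝ≥0∞) ^ (M * k) := by
        rw [hbadcard]; push_cast; ring
    _ ≤ ENNReal.ofReal (Real.exp (-(k : ℝ))) := hfinal

end
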